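/- Let K, L be convex bodies in ℝⁿ with L containing the origin in its interior, and suppose W₀, W₁, …, W_n are the relative quermassintegrals of K with respect to L, i.e. V(K + tL) = Σ_{i=0}^{n} C(n,i) W_i tⁱ for all t ≥ 0. For 0 ≤ i ≤ n−2 define the i-th relative Bonnesen function B_i(r) = 2W_{i+1} r − W_i − W_{i+2} r². For t ≥ 0 set K_t = K + tL, and let W_i(K_t,L) denote the relative quermassintegrals of K_t with respect to L (which exist and are uniquely determined, since V(K_t + sL) = V(K + (t+s)L) is a polynomial in s), with corresponding Bonnesen functions B_{i;K_t}(r) = 2W_{i+1}(K_t,L) r − W_i(K_t,L) − W_{i+2}(K_t,L) r². Then for all real r, all t ≥ 0 and all 0 ≤ i ≤ n−2: B_{i;K_t}(r + t) = Σ_{k=0}^{n−i−2} C(n−i−2, k) B_{i+k}(r) t^k. -/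

import Mathlib

open scoped Pointwise
open MeasureTheory

private lemma sum_pascal' (a : ℕ → ℝ) (t : ℝ) (j m : ℕ) :
    ∑ k ∈ Finset.range (m+2), ((m+1).choose k : ℝ) * a (j+k) * t^k
    = ∑ k ∈ Finset.range (m+1), (m.choose k : ℝ) * a (j+k) * t^k
      + t * ∑ k ∈ Finset.range (m+1), (m.choose k : ℝ) * a (j+1+k) * t^k := by
  rw [Finset.sum_range_succ' (fun k => ((m+1).choose k : ℝ) * a (j+k) * t^k) (m+1)]
  have h1 : ∀ k, (((m+1).choose (k+1) : ℕ) : ℝ) = (m.choose k : ℝ) + (m.choose (k+1) : ℝ) := by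
    intro k; rw [Nat.choose_succ_succ]; push_cast; ring
  simp only [h1]
  have expand : ∀ k, ((m.choose k : ℝ) + (m.choose (k+1) : ℝ)) * a (j+(k+1)) * t^(k+1)
      = (m.choose k : ℝ) * a (j+1+k) * t^(k+1) + (m.choose (k+1) : ℝ) * a (j+(k+1)) * t^(k+1) := by
    intro k
    have : j + (k+1) = j + 1 + k := by omega
    rw [this]; ring
  rw [Finset.sum_congr rfl (fun k _ => expand k), Finset.sum_add_distrib]
  have h2 : ∑ k ∈ Finset.range (m+1), (m.choose (k+1) : ℝ) * a (j+(k+1)) * t^(k+1)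
        + ((m+1).choose 0 : ℝ) * a (j+0) * t^0
      = ∑ k ∈ Finset.range (m+2), (m.choose k : ℝ) * a (j+k) * t^k := by
    rw [Finset.sum_range_succ' (fun k => (m.choose k : ℝ) * a (j+k) * t^k) (m+1)]
    simp
  have h3 : ∑ k ∈ Finset.range (m+2), (m.choose k : ℝ) * a (j+k) * t^k
      = ∑ k ∈ Finset.range (m+1), (m.choose k : ℝ) * a (j+k) * t^k := by
    rw [Finset.sum_range_succ]
    simp [Nat.choose_succ_self]
  have h4 : ∑ k ∈ Finset.range (m+1), (m.choose k : ℝ) * a (j+1+k) * t^(k+1)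
      = t * ∑ k ∈ Finset.range (m+1), (m.choose k : ℝ) * a (j+1+k) * t^k := by
    rw [Finset.mul_sum]; apply Finset.sum_congr rfl; intro k _; ring
  rw [h3] at h2; linarith [h2, h4]

theorem bonnesen_function_of_outer_parallel_body
    (n : ℕ) (K L : Set (EuclideanSpace ℝ (Fin n)))
    (hKc : IsCompact K) (hKconv : Convex ℝ K) (hKint : (interior K).Nonempty)
    (hLc : IsCompact L) (hLconv : Convex ℝ L) (hLint : (interior L).Nonempty)
    (hL0 : (0 : EuclideanSpace ℝ (Fin n)) ∈ interior L)
    (W : ℕ → ℝ)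
    (hW : ∀ t : ℝ, 0 ≤ t →
      (volume (K + t • L)).toReal
        = ∑ i ∈ Finset.range (n + 1), (n.choose i : ℝ) * W i * t ^ i)
    (t : ℝ) (ht : 0 ≤ t) (Wt : ℕ → ℝ)
    (hWt : ∀ s : ℝ, 0 ≤ s →
      (volume ((K + t • L) + s • L)).toReal
        = ∑ i ∈ Finset.range (n + 1), (n.choose i : ℝ) * Wt i * s ^ i)
    (i : ℕ) (hi : i + 2 ≤ n) (r : ℝ) :
    2 * Wt (i + 1) * (r + t) - Wt i - Wt (i + 2) * (r + t) ^ 2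
      = ∑ k ∈ Finset.range (n - i - 2 + 1),
          ((n - i - 2).choose k : ℝ) *
            (2 * W (i + k + 1) * r - W (i + k) - W (i + k + 2) * r ^ 2) * t ^ k := by
  -- Step 1: the two Steiner polynomials agree for s ≥ 0
  have hset : ∀ s : ℝ, 0 ≤ s → (K + t • L) + s • L = K + (t + s) • L := by
    intro s hs
    rw [hLconv.add_smul ht hs, add_assoc]
  have hagree : ∀ s : ℝ, 0 ≤ s →
      ∑ l ∈ Finset.range (n+1), (n.choose l : ℝ) * Wt l * s ^ l
      = ∑ l ∈ Finset.range (n+1), (n.choose l : ℝ) * W l * (s + t) ^ l := by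
    intro s hs
    rw [← hWt s hs, hset s hs, hW (t+s) (by linarith)]
    apply Finset.sum_congr rfl
    intro l _
    rw [add_comm s t]
  -- Step 2: polynomial identity, hence coefficient identity
  have hcoeff : ∀ j, j ≤ n → (n.choose j : ℝ) * Wt j
      = ∑ l ∈ Finset.range (n+1), (n.choose l : ℝ) * W l * (t ^ (l - j) * (l.choose j : ℝ)) := by
    intro j hj
    set P : Polynomial ℝ := ∑ l ∈ Finset.range (n+1),
      Polynomial.C ((n.choose l : ℝ) * Wt l) * Polynomial.X ^ l with hP
    set Q : Polynomial ℝ := ∑ l ∈ Finset.range (n+1),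
      Polynomial.C ((n.choose l : ℝ) * W l) * (Polynomial.X + Polynomial.C t) ^ l with hQ
    have hPQ : P = Q := by
      apply Polynomial.eq_of_infinite_eval_eq
      apply Set.Infinite.mono (s := Set.Ici (0:ℝ)) _ (Set.Ici_infinite 0)
      intro s hs
      simp only [Set.mem_setOf_eq, hP, hQ, Polynomial.eval_finset_sum, Polynomial.eval_mul,
        Polynomial.eval_C, Polynomial.eval_pow, Polynomial.eval_add, Polynomial.eval_X]
      exact hagree s hs
    have h1 : P.coeff j = (n.choose j : ℝ) * Wt j := by
      simp only [hP, Polynomial.finset_sum_coeff, Polynomial.coeff_C_mul,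
        Polynomial.coeff_X_pow, mul_ite, mul_one, mul_zero]
      rw [Finset.sum_ite_eq (Finset.range (n+1)) j (fun l => (n.choose l : ℝ) * Wt l)]
      simp [Nat.lt_succ_iff.mpr hj]
    have h2 : Q.coeff j
        = ∑ l ∈ Finset.range (n+1), (n.choose l : ℝ) * W l * (t ^ (l - j) * (l.choose j : ℝ)) := by
      simp only [hQ, Polynomial.finset_sum_coeff, Polynomial.coeff_C_mul,
        Polynomial.coeff_X_add_C_pow]
    rw [← h1, hPQ, h2]
  -- Step 3: Wt j in terms of W
  have key : ∀ j, j ≤ n →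
      Wt j = ∑ k ∈ Finset.range (n - j + 1), ((n-j).choose k : ℝ) * W (j+k) * t^k := by
    intro j hj
    have hc := hcoeff j hj
    have hsub : ∑ l ∈ Finset.range (n+1), (n.choose l : ℝ) * W l * (t ^ (l - j) * (l.choose j : ℝ))
        = ∑ l ∈ Finset.Ico j (n+1), (n.choose l : ℝ) * W l * (t ^ (l - j) * (l.choose j : ℝ)) := by
      rw [Finset.range_eq_Ico]
      apply (Finset.sum_subset (Finset.Ico_subset_Ico (Nat.zero_le j) le_rfl) _).symm
      intro l hl hnl
      simp only [Finset.mem_Ico] at hl hnl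
      have : l < j := by omega
      rw [Nat.choose_eq_zero_of_lt this]
      simp
    rw [hsub, Finset.sum_Ico_eq_sum_range] at hc
    have hn1 : n + 1 - j = n - j + 1 := by omega
    rw [hn1] at hc
    have hterm : ∀ k ∈ Finset.range (n - j + 1),
        (n.choose (j+k) : ℝ) * W (j+k) * (t ^ (j + k - j) * ((j+k).choose j : ℝ))
        = (n.choose j : ℝ) * (((n-j).choose k : ℝ) * W (j+k) * t^k) := by
      intro k hk
      simp only [Finset.mem_range] at hk
      have hjk : j + k ≤ n := by omega
      have hcc : (n.choose (j+k) : ℝ) * ((j+k).choose j : ℝ)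
          = (n.choose j : ℝ) * ((n-j).choose (j + k - j) : ℝ) := by
        rw [← Nat.cast_mul, ← Nat.cast_mul, Nat.choose_mul (Nat.le_add_right j k)]
      have hd : j + k - j = k := by omega
      rw [hd] at hcc ⊢
      linear_combination (W (j+k) * t^k) * hcc
    rw [Finset.sum_congr rfl hterm, ← Finset.mul_sum] at hc
    have hpos : (n.choose j : ℝ) ≠ 0 := by
      simp [Nat.choose_eq_zero_iff]; omega
    exact mul_left_cancel₀ hpos hc
  -- Step 4: algebra
  set m := n - i - 2 with hm
  have e2 : Wt (i+2) = ∑ k ∈ Finset.range (m+1), (m.choose k : ℝ) * W (i+2+k) * t^k := by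
    have := key (i+2) hi
    have h : n - (i+2) = m := by omega
    rw [h] at this
    exact this
  have e1 : Wt (i+1) = ∑ k ∈ Finset.range (m+1), (m.choose k : ℝ) * W (i+1+k) * t^k
      + t * ∑ k ∈ Finset.range (m+1), (m.choose k : ℝ) * W (i+2+k) * t^k := by
    have := key (i+1) (by omega)
    have h : n - (i+1) = m + 1 := by omega
    rw [h] at this
    rw [this, sum_pascal' W t (i+1) m]
  have e0 : Wt i = ∑ k ∈ Finset.range (m+1), (m.choose k : ℝ) * W (i+k) * t^k
      + 2 * t * ∑ k ∈ Finset.range (m+1), (m.choose k : ℝ) * W (i+1+k) * t^k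
      + t^2 * ∑ k ∈ Finset.range (m+1), (m.choose k : ℝ) * W (i+2+k) * t^k := by
    have := key i (by omega)
    have h : n - i = m + 2 := by omega
    rw [h] at this
    rw [this, sum_pascal' W t i (m+1), sum_pascal' W t i m, sum_pascal' W t (i+1) m]
    have h2 : i+1+1 = i+2 := by omega
    simp only [h2]
    ring
  have hRHS : ∑ k ∈ Finset.range (m + 1),
        (m.choose k : ℝ) * (2 * W (i + k + 1) * r - W (i + k) - W (i + k + 2) * r ^ 2) * t ^ k
      = 2 * r * (∑ k ∈ Finset.range (m+1), (m.choose k : ℝ) * W (i+1+k) * t^k)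
        - (∑ k ∈ Finset.range (m+1), (m.choose k : ℝ) * W (i+k) * t^k)
        - r^2 * (∑ k ∈ Finset.range (m+1), (m.choose k : ℝ) * W (i+2+k) * t^k) := by
    rw [Finset.mul_sum, Finset.mul_sum, ← Finset.sum_sub_distrib, ← Finset.sum_sub_distrib]
    apply Finset.sum_congr rfl
    intro k _
    have ha : i + k + 1 = i + 1 + k := by omega
    have hb : i + k + 2 = i + 2 + k := by omega
    rw [ha, hb]
    ring
  rw [hRHS, e0, e1, e2]
  ring
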